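/- Suppose (H1) and (H2) hold with β > 0, and let φ̄ ∈ Γ be an upper solution of −u'(t) + f(u_t) = 0. Define x₁(t) = ∫_{−∞}^{t} e^{−β(t−s)} H(φ̄)(s) ds for t ∈ ℝ. Then x₁ belongs to the profile set Γ; that is, x₁ is non-decreasing, lim_{t→−∞} x₁(t) = 0, lim_{t→+∞} x₁(t) = K, and for every s > 0 the function t ↦ e^{βt}(x₁(t+s) − x₁(t)) is non-decreasing on ℝ. -/

import Mathlib

open Real Filter MeasureTheory

/-- The segment `u_t ∈ C([−τ,0],ℝ)` of a function `u : ℝ → ℝ`, `u_t(s) = u(t+s)`. -/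
def seg (τ : ℝ) (u : ℝ → ℝ) (t : ℝ) : Set.Icc (-τ) (0 : ℝ) → ℝ :=
  fun s => u (t + s.1)

private lemma aux_hasDeriv {β : ℝ} (hβ : 0 < β) (x : ℝ) :
    HasDerivAt (fun s => Real.exp (β * s) / β) (Real.exp (β * x)) x := by
  have h1 : HasDerivAt (fun s : ℝ => Real.exp (β * s)) (Real.exp (β * x) * β) x := by
    simpa [mul_comm] using ((hasDerivAt_id x).const_mul β).exp
  have h2 := h1.div_const β
  have h3 : Real.exp (β * x) * β / β = Real.exp (β * x) := by field_simp
  rwa [h3] at h2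

private lemma aux_expInt {β : ℝ} (hβ : 0 < β) (c : ℝ) :
    IntegrableOn (fun s => Real.exp (β * s)) (Set.Iic c) := by
  have hc : Continuous fun s : ℝ => Real.exp (β * s) :=
    Real.continuous_exp.comp (continuous_const.mul continuous_id)
  refine integrableOn_Iic_of_intervalIntegral_norm_bounded (Real.exp (β * c) / β) c
    (fun y => hc.integrableOn_Ioc) tendsto_id ?_
  filter_upwards with y
  have h1 : ∀ x : ℝ, ‖Real.exp (β * x)‖ = Real.exp (β * x) := fun x =>
    Real.norm_of_nonneg (Real.exp_pos _).le
  simp_rw [h1]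
  simp only [id_eq]
  rw [intervalIntegral.integral_eq_sub_of_hasDerivAt
    (fun x _ => aux_hasDeriv hβ x) (hc.intervalIntegrable _ _)]
  have h2 := (Real.exp_pos (β * y)).le
  have h3 : 0 ≤ Real.exp (β * y) / β := div_nonneg h2 hβ.le
  linarith

private lemma aux_integral_exp {β : ℝ} (hβ : 0 < β) (c : ℝ) :
    ∫ s in Set.Iic c, Real.exp (β * s) = Real.exp (β * c) / β := by
  have h : ∀ x ∈ Set.Iic c, HasDerivAt (fun s => Real.exp (β * s) / β)
      (Real.exp (β * x)) x := fun x _ => aux_hasDeriv hβ x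
  have htend : Tendsto (fun s => Real.exp (β * s) / β) atBot (nhds 0) := by
    have h1 : Tendsto (fun s : ℝ => β * s) atBot atBot :=
      tendsto_id.const_mul_atBot hβ
    have := (Real.tendsto_exp_atBot.comp h1).div_const β
    simpa using this
  have := integral_Iic_of_hasDerivAt_of_tendsto' h (aux_expInt hβ c) htend
  rw [this]; ring

private lemma aux_shift (F : ℝ → ℝ) (t h : ℝ) :
    ∫ s in Set.Iic (t + h), F s = ∫ s in Set.Iic t, F (s + h) := by
  rw [← integral_indicator measurableSet_Iic, ← integral_indicator measurableSet_Iic,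
    ← integral_add_right_eq_self ((Set.Iic (t + h)).indicator F) h]
  congr 1
  funext x
  by_cases hx : x ≤ t
  · simp [Set.indicator_apply, Set.mem_Iic, hx, add_le_add_iff_right]
  · simp [Set.indicator_apply, Set.mem_Iic, hx, add_le_add_iff_right]

/-- Under (H1) and (H2) with `β > 0`, if `φ̄ ∈ Γ` is an upper solution of
`−u'(t) + f(u_t) = 0` and `x₁(t) = ∫_{−∞}^t e^{−β(t−s)} H(φ̄)(s) ds`, then `x₁`
belongs to the profile set `Γ`. -/
theorem x1_mem_profile_set
    (τ : ℝ) (hτ : 0 < τ)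
    (f : (Set.Icc (-τ) (0 : ℝ) → ℝ) → ℝ)
    (hf : Continuous fun φ : C(Set.Icc (-τ) (0 : ℝ), ℝ) => f ⇑φ)
    (K : ℝ) (hK : 0 < K)
    -- (H1)
    (hH1₀ : f (fun _ => (0 : ℝ)) = 0) (hH1K : f (fun _ => K) = 0)
    (hH1ne : ∀ u : ℝ, 0 < u → u < K → f (fun _ => u) ≠ 0)
    (β : ℝ) (hβ : 0 < β)
    -- (H2)
    (hH2 : ∀ φ ψ : Set.Icc (-τ) (0 : ℝ) → ℝ, Continuous φ → Continuous ψ →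
      (∀ s, 0 ≤ ψ s ∧ ψ s ≤ φ s ∧ φ s ≤ K) →
      Monotone (fun s : Set.Icc (-τ) (0 : ℝ) => Real.exp (β * s.1) * (φ s - ψ s)) →
      0 ≤ f φ - f ψ +
        β * (φ ⟨0, Set.right_mem_Icc.mpr (neg_nonpos.mpr hτ.le)⟩ -
             ψ ⟨0, Set.right_mem_Icc.mpr (neg_nonpos.mpr hτ.le)⟩))
    -- φ̄ ∈ Γ
    (φb : ℝ → ℝ) (hφbc : Continuous φb) (hφbm : Monotone φb)
    (hφb₀ : Tendsto φb atBot (nhds 0)) (hφbK : Tendsto φb atTop (nhds K))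
    (hφbΓ : ∀ s : ℝ, 0 < s →
      Monotone fun t : ℝ => Real.exp (β * t) * (φb (t + s) - φb t))
    -- φ̄ is an upper solution
    (hup : ∃ D : ℝ → ℝ, (∀ᵐ t ∂(volume : Measure ℝ), HasDerivAt φb (D t) t) ∧
      (∃ M : ℝ, ∀ᵐ t ∂(volume : Measure ℝ), |D t| ≤ M) ∧
      (∀ᵐ t ∂(volume : Measure ℝ), f (seg τ φb t) ≤ D t))
    -- x₁
    (x₁ : ℝ → ℝ)
    (hx₁ : ∀ t : ℝ, x₁ t =
      ∫ s in Set.Iic t, Real.exp (-β * (t - s)) * (f (seg τ φb s) + β * φb s)) :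
    Continuous x₁ ∧ Monotone x₁ ∧
      Tendsto x₁ atBot (nhds 0) ∧ Tendsto x₁ atTop (nhds K) ∧
      ∀ s : ℝ, 0 < s →
        Monotone fun t : ℝ => Real.exp (β * t) * (x₁ (t + s) - x₁ t) := by
  clear hup hH1ne
  obtain ⟨H, hHdef⟩ : ∃ H : ℝ → ℝ, ∀ t, H t = f (seg τ φb t) + β * φb t :=
    ⟨_, fun _ => rfl⟩
  -- basic bounds on φb
  have hφb0 : ∀ x, 0 ≤ φb x := fun x =>
    le_of_tendsto hφb₀ (Filter.eventually_atBot.2 ⟨x, fun y hy => hφbm hy⟩)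
  have hφbK' : ∀ x, φb x ≤ K := fun x =>
    ge_of_tendsto hφbK (Filter.eventually_atTop.2 ⟨x, fun y hy => hφbm hy⟩)
  -- continuity of the segment map and of H
  have hsegc : ∀ t, Continuous (seg τ φb t) := fun t =>
    hφbc.comp (continuous_const.add continuous_subtype_val)
  let G : C(ℝ × Set.Icc (-τ) (0:ℝ), ℝ) := ⟨fun p => φb (p.1 + p.2.1), hφbc.comp (continuous_fst.add (continuous_subtype_val.comp continuous_snd))⟩
  let Φ : C(ℝ, C(Set.Icc (-τ) (0:ℝ), ℝ)) := ContinuousMap.curry G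
  have hΦapp : ∀ t, ⇑(Φ t) = seg τ φb t := fun t => rfl
  have hfseg : Continuous fun t => f (seg τ φb t) := by
    have h1 : Continuous fun t => f ⇑(Φ t) := hf.comp Φ.continuous
    exact h1
  have hHc : Continuous H := by
    have : Continuous fun t => f (seg τ φb t) + β * φb t :=
      hfseg.add (continuous_const.mul hφbc)
    exact this.congr fun t => (hHdef t).symm
  -- H is monotone
  have hHmono : Monotone H := by
    intro t₁ t₂ hle
    rcases eq_or_lt_of_le hle with rfl | hlt
    · exact le_refl _
    have key : ∀ r₁ r₂ : ℝ, r₁ ≤ r₂ →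
        Real.exp (β * r₁) * (φb (t₂ + r₁) - φb (t₁ + r₁)) ≤
          Real.exp (β * r₂) * (φb (t₂ + r₂) - φb (t₁ + r₂)) := by
      intro r₁ r₂ hr
      have h₀ := hφbΓ (t₂ - t₁) (by linarith) (show t₁ + r₁ ≤ t₁ + r₂ by linarith)
      have hrw : ∀ r : ℝ, Real.exp (β * (t₁ + r)) * (φb ((t₁ + r) + (t₂ - t₁)) - φb (t₁ + r)) =
          Real.exp (β * t₁) * (Real.exp (β * r) * (φb (t₂ + r) - φb (t₁ + r))) := by
        intro r
        rw [show (t₁ + r) + (t₂ - t₁) = t₂ + r by ring,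
          show β * (t₁ + r) = β * t₁ + β * r by ring, Real.exp_add]
        ring
      simp only [] at h₀
      rw [hrw r₁, hrw r₂] at h₀
      exact (mul_le_mul_iff_right₀ (Real.exp_pos _)).mp h₀
    have h2 := hH2 (seg τ φb t₂) (seg τ φb t₁) (hsegc t₂) (hsegc t₁)
      (fun s => ⟨hφb0 _, hφbm (by linarith [hlt.le] : t₁ + s.1 ≤ t₂ + s.1), hφbK' _⟩)
      (fun a b hab => key a.1 b.1 hab)
    simp only [seg, add_zero] at h2
    rw [hHdef t₁, hHdef t₂]
    linarith
  -- limits of H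
  have hΦtop : Tendsto Φ atTop (nhds (ContinuousMap.const _ K)) := by
    rw [tendsto_iff_dist_tendsto_zero]
    have hb : ∀ t, dist (Φ t) (ContinuousMap.const _ K) ≤ K - φb (t - τ) := by
      intro t
      rw [ContinuousMap.dist_le (by linarith [hφbK' (t - τ)])]
      intro x
      have hx1 : (Φ t) x = φb (t + x.1) := rfl
      rw [ContinuousMap.const_apply, hx1]
      rw [Real.dist_eq, abs_of_nonpos (by linarith [hφbK' (t + x.1)])]
      have : t - τ ≤ t + x.1 := by linarith [x.2.1]
      linarith [hφbm this]
    have hg : Tendsto (fun t : ℝ => K - φb (t - τ)) atTop (nhds 0) := by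
      have h1 : Tendsto (fun t : ℝ => φb (t - τ)) atTop (nhds K) :=
        hφbK.comp (tendsto_atTop_add_const_right _ _ tendsto_id)
      have := h1.const_sub K
      simpa using this
    exact squeeze_zero (fun t => dist_nonneg) hb hg
  have hΦbot : Tendsto Φ atBot (nhds (ContinuousMap.const _ 0)) := by
    rw [tendsto_iff_dist_tendsto_zero]
    have hb : ∀ t, dist (Φ t) (ContinuousMap.const _ 0) ≤ φb t := by
      intro t
      rw [ContinuousMap.dist_le (hφb0 t)]
      intro x
      have hx1 : (Φ t) x = φb (t + x.1) := rfl
      rw [ContinuousMap.const_apply, hx1]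
      rw [Real.dist_eq, sub_zero, abs_of_nonneg (hφb0 _)]
      exact hφbm (by linarith [x.2.2])
    exact squeeze_zero (fun t => dist_nonneg) hb hφb₀
  have hHtop : Tendsto H atTop (nhds (β * K)) := by
    have h1 : Tendsto (fun t => f ⇑(Φ t)) atTop (nhds (f ⇑(ContinuousMap.const _ K))) :=
      (hf.tendsto _).comp hΦtop
    have h2 : Tendsto (fun t => f (seg τ φb t)) atTop (nhds 0) := by
      have : f ⇑(ContinuousMap.const (Set.Icc (-τ) (0:ℝ)) K) = 0 := hH1K
      rwa [this] at h1
    have h3 : Tendsto (fun t => β * φb t) atTop (nhds (β * K)) := hφbK.const_mul β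
    have := h2.add h3
    rw [zero_add] at this
    exact this.congr fun t => (hHdef t).symm
  have hHbot : Tendsto H atBot (nhds 0) := by
    have h1 : Tendsto (fun t => f ⇑(Φ t)) atBot (nhds (f ⇑(ContinuousMap.const _ 0))) :=
      (hf.tendsto _).comp hΦbot
    have h2 : Tendsto (fun t => f (seg τ φb t)) atBot (nhds 0) := by
      have : f ⇑(ContinuousMap.const (Set.Icc (-τ) (0:ℝ)) (0:ℝ)) = 0 := hH1₀
      rwa [this] at h1
    have h3 : Tendsto (fun t => β * φb t) atBot (nhds 0) := by
      have := hφb₀.const_mul β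
      simpa using this
    have := h2.add h3
    rw [add_zero] at this
    exact this.congr fun t => (hHdef t).symm
  have hH0 : ∀ t, 0 ≤ H t := fun t =>
    le_of_tendsto hHbot (Filter.eventually_atBot.2 ⟨t, fun y hy => hHmono hy⟩)
  have hHK : ∀ t, H t ≤ β * K := fun t =>
    ge_of_tendsto hHtop (Filter.eventually_atTop.2 ⟨t, fun y hy => hHmono hy⟩)
  -- integrability
  have hmeas : ∀ (a t : ℝ), IntegrableOn (fun s => Real.exp (β * s) * H (s + a))
      (Set.Iic t) := by
    intro a t
    refine ((aux_expInt hβ t).mul_const (β * K)).mono' ?_ ?_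
    · exact ((Real.continuous_exp.comp (continuous_const.mul continuous_id)).mul
        (hHc.comp (continuous_id.add continuous_const))).aestronglyMeasurable
    · refine Filter.Eventually.of_forall fun s => ?_
      rw [Real.norm_eq_abs, abs_of_nonneg (mul_nonneg (Real.exp_pos _).le (hH0 _))]
      exact mul_le_mul_of_nonneg_left (hHK _) (Real.exp_pos _).le
  have hmeas0 : ∀ t, IntegrableOn (fun s => Real.exp (β * s) * H s) (Set.Iic t) := by
    intro t
    have := hmeas 0 t
    simpa using this
  -- reformulation of x₁
  have hx₁H : ∀ t, x₁ t = ∫ s in Set.Iic t, Real.exp (-β * (t - s)) * H s := by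
    intro t
    rw [hx₁ t]
    refine setIntegral_congr_fun measurableSet_Iic fun s _ => ?_
    rw [hHdef s]
  have hxJ : ∀ t, x₁ t = Real.exp (-(β * t)) * ∫ s in Set.Iic t,
      Real.exp (β * s) * H s := by
    intro t
    rw [hx₁H t, ← integral_const_mul]
    refine setIntegral_congr_fun measurableSet_Iic fun s _ => ?_
    rw [show Real.exp (-(β * t)) * (Real.exp (β * s) * H s) =
      (Real.exp (-(β * t)) * Real.exp (β * s)) * H s by ring, ← Real.exp_add,
      show -(β * t) + β * s = -β * (t - s) by ring]
  have hxJa : ∀ (a t : ℝ), x₁ (t + a) = Real.exp (-(β * t)) * ∫ s in Set.Iic t,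
      Real.exp (β * s) * H (s + a) := by
    intro a t
    rw [hxJ (t + a), aux_shift (fun s => Real.exp (β * s) * H s) t a,
      ← integral_const_mul, ← integral_const_mul]
    refine setIntegral_congr_fun measurableSet_Iic fun s _ => ?_
    have h1 : Real.exp (-(β * (t + a))) * Real.exp (β * (s + a)) =
        Real.exp (-(β * t)) * Real.exp (β * s) := by
      rw [← Real.exp_add, ← Real.exp_add]
      congr 1
      ring
    calc Real.exp (-(β * (t + a))) * (Real.exp (β * (s + a)) * H (s + a))
        = (Real.exp (-(β * (t + a))) * Real.exp (β * (s + a))) * H (s + a) := by ring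
      _ = (Real.exp (-(β * t)) * Real.exp (β * s)) * H (s + a) := by rw [h1]
      _ = Real.exp (-(β * t)) * (Real.exp (β * s) * H (s + a)) := by ring
  -- difference formula
  have hdiff : ∀ (t h : ℝ), x₁ (t + h) - x₁ t =
      Real.exp (-(β * t)) * ∫ s in Set.Iic t, Real.exp (β * s) * (H (s + h) - H s) := by
    intro t h
    have hsubint : ∫ s in Set.Iic t, Real.exp (β * s) * (H (s + h) - H s) =
        (∫ s in Set.Iic t, Real.exp (β * s) * H (s + h)) -
        ∫ s in Set.Iic t, Real.exp (β * s) * H s := by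
      rw [← integral_sub (hmeas h t) (hmeas0 t)]
      exact setIntegral_congr_fun measurableSet_Iic fun s _ => by ring
    rw [hxJa h t, hxJ t, hsubint, mul_sub]
  -- monotonicity of x₁
  have hx₁mono : Monotone x₁ := by
    intro t₁ t₂ hle
    have h := hdiff t₁ (t₂ - t₁)
    rw [show t₁ + (t₂ - t₁) = t₂ by ring] at h
    have hint : 0 ≤ ∫ s in Set.Iic t₁, Real.exp (β * s) * (H (s + (t₂ - t₁)) - H s) :=
      setIntegral_nonneg measurableSet_Iic fun s _ =>
        mul_nonneg (Real.exp_pos _).le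
          (sub_nonneg.2 (hHmono (by linarith : s ≤ s + (t₂ - t₁))))
    nlinarith [Real.exp_pos (-(β * t₁))]
  -- the Γ-condition for x₁
  have hΓ : ∀ s : ℝ, 0 < s →
      Monotone fun t : ℝ => Real.exp (β * t) * (x₁ (t + s) - x₁ t) := by
    intro s hs
    have hint2 : ∀ t, IntegrableOn (fun r => Real.exp (β * r) * (H (r + s) - H r))
        (Set.Iic t) := by
      intro t
      exact IntegrableOn.congr_fun ((hmeas s t).sub (hmeas0 t))
        (fun r _ => by simp only [Pi.sub_apply]; ring) measurableSet_Iic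
    have key : ∀ t, Real.exp (β * t) * (x₁ (t + s) - x₁ t) =
        ∫ r in Set.Iic t, Real.exp (β * r) * (H (r + s) - H r) := by
      intro t
      rw [hdiff t s, ← mul_assoc, ← Real.exp_add,
        show β * t + -(β * t) = 0 by ring, Real.exp_zero, one_mul]
    intro t₁ t₂ hle
    simp only []
    rw [key t₁, key t₂]
    refine setIntegral_mono_set (hint2 t₂) ?_ (Set.Iic_subset_Iic.mpr hle).eventuallyLE
    refine Filter.Eventually.of_forall fun r => ?_
    exact mul_nonneg (Real.exp_pos _).le
      (sub_nonneg.2 (hHmono (le_add_of_nonneg_right hs.le)))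
  -- nonnegativity and upper bound of x₁
  have hx₁nonneg : ∀ t, 0 ≤ x₁ t := by
    intro t
    rw [hx₁H t]
    exact setIntegral_nonneg measurableSet_Iic fun s _ =>
      mul_nonneg (Real.exp_pos _).le (hH0 s)
  have hexp_cancel : ∀ t : ℝ, Real.exp (-(β * t)) * Real.exp (β * t) = 1 := by
    intro t
    rw [← Real.exp_add, neg_add_cancel, Real.exp_zero]
  have hx₁le : ∀ t, x₁ t ≤ H t / β := by
    intro t
    have h2 : ∫ s in Set.Iic t, Real.exp (β * s) * H s ≤
        ∫ s in Set.Iic t, Real.exp (β * s) * H t :=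
      setIntegral_mono_on (hmeas0 t) ((aux_expInt hβ t).mul_const _) measurableSet_Iic
        fun s hs => mul_le_mul_of_nonneg_left (hHmono hs) (Real.exp_pos _).le
    have h3 : ∫ s in Set.Iic t, Real.exp (β * s) * H t =
        Real.exp (β * t) / β * H t := by
      rw [integral_mul_const, aux_integral_exp hβ]
    rw [hxJ t]
    calc Real.exp (-(β * t)) * ∫ s in Set.Iic t, Real.exp (β * s) * H s
        ≤ Real.exp (-(β * t)) * (Real.exp (β * t) / β * H t) := by
          rw [← h3]
          exact mul_le_mul_of_nonneg_left h2 (Real.exp_pos _).le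
      _ = (Real.exp (-(β * t)) * Real.exp (β * t)) * (H t / β) := by ring
      _ = H t / β := by rw [hexp_cancel t, one_mul]
  -- limit at -∞
  have hbot : Tendsto x₁ atBot (nhds 0) := by
    have h1 : Tendsto (fun t => H t / β) atBot (nhds 0) := by
      have := hHbot.div_const β
      simpa using this
    exact tendsto_of_tendsto_of_tendsto_of_le_of_le tendsto_const_nhds h1
      (fun t => hx₁nonneg t) (fun t => hx₁le t)
  have hx₁leK : ∀ t, x₁ t ≤ K := by
    intro t
    refine (hx₁le t).trans ?_
    rw [div_le_iff₀ hβ]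
    linarith [hHK t]
  -- key estimate for the limit at +∞
  have hest : ∀ a t : ℝ, a ≤ t →
      K - x₁ t ≤ K * Real.exp (β * (a - t)) + (β * K - H a) / β := by
    intro a t hat
    have hGint : ∀ c, IntegrableOn (fun s => Real.exp (β * s) * (β * K - H s))
        (Set.Iic c) := by
      intro c
      exact IntegrableOn.congr_fun (((aux_expInt hβ c).mul_const (β * K)).sub (hmeas0 c))
        (fun r _ => by simp only [Pi.sub_apply]; ring) measurableSet_Iic
    have hKint : ∫ s in Set.Iic t, Real.exp (β * s) * (β * K) = K * Real.exp (β * t) := by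
      rw [integral_mul_const, aux_integral_exp hβ]
      field_simp
    have hsub : ∫ s in Set.Iic t, Real.exp (β * s) * (β * K - H s) =
        K * Real.exp (β * t) - ∫ s in Set.Iic t, Real.exp (β * s) * H s := by
      rw [show (fun s => Real.exp (β * s) * (β * K - H s)) =
        fun s => Real.exp (β * s) * (β * K) - Real.exp (β * s) * H s from
        funext fun s => by ring]
      rw [integral_sub ((aux_expInt hβ t).mul_const _) (hmeas0 t), hKint]
    have hKx : K - x₁ t = Real.exp (-(β * t)) *
        ∫ s in Set.Iic t, Real.exp (β * s) * (β * K - H s) := by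
      rw [hsub, mul_sub, ← hxJ t]
      have : Real.exp (-(β * t)) * (K * Real.exp (β * t)) =
          (Real.exp (-(β * t)) * Real.exp (β * t)) * K := by ring
      rw [this, hexp_cancel t, one_mul]
    have hsplit : ∫ s in Set.Iic t, Real.exp (β * s) * (β * K - H s) =
        (∫ s in Set.Iic a, Real.exp (β * s) * (β * K - H s)) +
        ∫ s in a..t, Real.exp (β * s) * (β * K - H s) := by
      have := intervalIntegral.integral_Iic_sub_Iic (hGint a) (hGint t)
      linarith
    have hb1 : ∫ s in Set.Iic a, Real.exp (β * s) * (β * K - H s) ≤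
        K * Real.exp (β * a) := by
      calc ∫ s in Set.Iic a, Real.exp (β * s) * (β * K - H s)
          ≤ ∫ s in Set.Iic a, Real.exp (β * s) * (β * K) :=
            setIntegral_mono_on (hGint a) ((aux_expInt hβ a).mul_const _)
              measurableSet_Iic fun s _ =>
              mul_le_mul_of_nonneg_left (by linarith [hH0 s]) (Real.exp_pos _).le
        _ = K * Real.exp (β * a) := by
            rw [integral_mul_const, aux_integral_exp hβ]
            field_simp
    have hGc : Continuous fun s => Real.exp (β * s) * (β * K - H s) :=
      (Real.continuous_exp.comp (continuous_const.mul continuous_id)).mul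
        (continuous_const.sub hHc)
    have hGc2 : Continuous fun s : ℝ => Real.exp (β * s) * (β * K - H a) :=
      (Real.continuous_exp.comp (continuous_const.mul continuous_id)).mul continuous_const
    have hb2 : ∫ s in a..t, Real.exp (β * s) * (β * K - H s) ≤
        (β * K - H a) * (Real.exp (β * t) / β) := by
      have step1 : ∫ s in a..t, Real.exp (β * s) * (β * K - H s) ≤
          ∫ s in a..t, Real.exp (β * s) * (β * K - H a) := by
        refine intervalIntegral.integral_mono_on hat (hGc.intervalIntegrable a t)
          (hGc2.intervalIntegrable a t) fun x hx => ?_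
        exact mul_le_mul_of_nonneg_left (by linarith [hHmono hx.1]) (Real.exp_pos _).le
      have step2 : ∫ s in a..t, Real.exp (β * s) * (β * K - H a) =
          (Real.exp (β * t) / β - Real.exp (β * a) / β) * (β * K - H a) := by
        rw [intervalIntegral.integral_mul_const,
          ← intervalIntegral.integral_Iic_sub_Iic (aux_expInt hβ a) (aux_expInt hβ t),
          aux_integral_exp hβ, aux_integral_exp hβ]
      have step3 : (Real.exp (β * t) / β - Real.exp (β * a) / β) * (β * K - H a) ≤
          (β * K - H a) * (Real.exp (β * t) / β) := by
        have h1 : 0 ≤ β * K - H a := by linarith [hHK a]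
        have h2 : Real.exp (β * t) / β - Real.exp (β * a) / β ≤ Real.exp (β * t) / β := by
          have := (Real.exp_pos (β * a)).le
          have := (div_nonneg (Real.exp_pos (β * a)).le hβ.le)
          linarith
        calc (Real.exp (β * t) / β - Real.exp (β * a) / β) * (β * K - H a)
            ≤ Real.exp (β * t) / β * (β * K - H a) := mul_le_mul_of_nonneg_right h2 h1
          _ = (β * K - H a) * (Real.exp (β * t) / β) := by ring
      linarith
    have hE : Real.exp (-(β * t)) * (K * Real.exp (β * a) +
        (β * K - H a) * (Real.exp (β * t) / β)) =
        K * Real.exp (β * (a - t)) + (β * K - H a) / β := by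
      rw [Real.exp_neg, show β * (a - t) = β * a - β * t by ring, Real.exp_sub]
      field_simp
    calc K - x₁ t = Real.exp (-(β * t)) *
          ∫ s in Set.Iic t, Real.exp (β * s) * (β * K - H s) := hKx
      _ ≤ Real.exp (-(β * t)) * (K * Real.exp (β * a) +
          (β * K - H a) * (Real.exp (β * t) / β)) := by
          rw [hsplit]
          exact mul_le_mul_of_nonneg_left (add_le_add hb1 hb2) (Real.exp_pos _).le
      _ = K * Real.exp (β * (a - t)) + (β * K - H a) / β := hE
  -- limit at +∞
  have htop : Tendsto x₁ atTop (nhds K) := by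
    rw [Metric.tendsto_atTop]
    intro ε hε
    obtain ⟨a, ha⟩ : ∃ a : ℝ, β * K - H a < β * ε / 2 := by
      obtain ⟨N, hN⟩ := Metric.tendsto_atTop.mp hHtop (β * ε / 2) (by positivity)
      refine ⟨N, ?_⟩
      have := hN N le_rfl
      rw [Real.dist_eq] at this
      have := (abs_lt.mp this).1
      linarith
    have hdecay : Tendsto (fun t => K * Real.exp (β * (a - t))) atTop (nhds 0) := by
      have h1 : Tendsto (fun t : ℝ => β * (a - t)) atTop atBot := by
        have : Tendsto (fun t : ℝ => a - t) atTop atBot :=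
          tendsto_neg_atBot_iff.mpr (by simpa using (tendsto_atTop_add_const_left _ (-a) tendsto_id)) |>.congr (fun t => by ring)
        exact this.const_mul_atBot hβ
      have := (Real.tendsto_exp_atBot.comp h1).const_mul K
      simpa using this
    obtain ⟨N, hN⟩ := Metric.tendsto_atTop.mp hdecay (ε / 2) (by positivity)
    refine ⟨max N a, fun t ht => ?_⟩
    have h1 : a ≤ t := le_trans (le_max_right _ _) ht
    have h2 : K * Real.exp (β * (a - t)) < ε / 2 := by
      have := hN t (le_trans (le_max_left _ _) ht)
      rw [Real.dist_eq, sub_zero,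
        abs_of_nonneg (mul_nonneg hK.le (Real.exp_pos _).le)] at this
      exact this
    have h3 : (β * K - H a) / β < ε / 2 := by
      rw [div_lt_iff₀ hβ]
      nlinarith
    have h4 := hest a t h1
    rw [Real.dist_eq, abs_of_nonpos (by linarith [hx₁leK t])]
    linarith
  -- continuity
  have hcont : Continuous x₁ := by
    have hgc : Continuous fun s => Real.exp (β * s) * H s :=
      (Real.continuous_exp.comp (continuous_const.mul continuous_id)).mul hHc
    have hGc : Continuous fun t => ∫ s in Set.Iic t, Real.exp (β * s) * H s := by
      have heq : ∀ t, ∫ s in Set.Iic t, Real.exp (β * s) * H s =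
          (∫ s in Set.Iic 0, Real.exp (β * s) * H s) +
          ∫ s in (0:ℝ)..t, Real.exp (β * s) * H s := by
        intro t
        have := intervalIntegral.integral_Iic_sub_Iic (hmeas0 0) (hmeas0 t)
        linarith
      exact (continuous_const.add
        (intervalIntegral.continuous_primitive (fun a b => hgc.intervalIntegrable a b) 0)).congr
        fun t => (heq t).symm
    have : Continuous fun t => Real.exp (-(β * t)) *
        ∫ s in Set.Iic t, Real.exp (β * s) * H s :=
      (Real.continuous_exp.comp (continuous_const.mul continuous_id).neg).mul hGc
    exact this.congr fun t => (hxJ t).symm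
  exact ⟨hcont, hx₁mono, hbot, htop, hΓ⟩
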